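/- Let A = {a_0, …, a_{N−1}} ⊂ ℤ be spectral with spectrum Γ = {λ_0, …, λ_{N−1}}, and let B = F* D_Γ F be the associated local translation matrix, where F = (1/√N)(e^{−2πiλ_j a_k})_{j,k} and D_Γ is the diagonal matrix with entries e^{2πiλ_j}. Then for every i ∈ {0, …, N−1}, every n ∈ ℤ, every x ∈ [0,1], and every t ∈ ℝ, one has B^{⌊x+t⌋}·(e^{2πi({x+t}+a_k)(λ_i+n)})_{k=0}^{N−1} = e^{2πi(λ_i+n)t}·(e^{2πi(x+a_k)(λ_i+n)})_{k=0}^{N−1}, where ⌊·⌋ and {·} denote the integer and fractional parts. -/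
import Mathlib

open Complex Real Matrix

noncomputable section

/-- The enumerations `a : Fin N → ℤ` and `l : Fin N → ℝ` list a finite set `A ⊂ ℤ` together
with a spectrum `Γ ⊂ ℝ` for it: both are injective and
`Σ_{i} e^{2πi(a_j−a_k)λ_i} = N·δ_{jk}`. -/
def IsSpectrumPair (N : ℕ) (a : Fin N → ℤ) (l : Fin N → ℝ) : Prop :=
  Function.Injective a ∧ Function.Injective l ∧
  ∀ j k : Fin N,
    ∑ i : Fin N, Complex.exp (2 * Real.pi * Complex.I *
      (((a j : ℤ) : ℂ) - ((a k : ℤ) : ℂ)) * ((l i : ℝ) : ℂ)) =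
    if j = k then (N : ℂ) else 0

/-- The Fourier matrix `F = (1/√N)(e^{−2πiλ_j a_k})_{j,k}`. -/
def FmatFin (N : ℕ) (a : Fin N → ℤ) (l : Fin N → ℝ) : Matrix (Fin N) (Fin N) ℂ := fun j k =>
  (1 / Real.sqrt N : ℝ) *
    Complex.exp (-(2 * Real.pi * Complex.I) * ((l j : ℝ) : ℂ) * ((a k : ℤ) : ℂ))

/-- The diagonal matrix `D_Γ(t)` with entries `e^{2πiλ_j t}`. -/
def DmatFin (N : ℕ) (l : Fin N → ℝ) (t : ℝ) : Matrix (Fin N) (Fin N) ℂ :=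
  Matrix.diagonal fun j => Complex.exp (2 * Real.pi * Complex.I * ((l j : ℝ) : ℂ) * (t : ℂ))

/-- The group of local translations `U_Γ(t) = F* D_Γ(t) F`. -/
def UmatFin (N : ℕ) (a : Fin N → ℤ) (l : Fin N → ℝ) (t : ℝ) : Matrix (Fin N) (Fin N) ℂ :=
  (FmatFin N a l)ᴴ * DmatFin N l t * FmatFin N a l

/-- The local translation matrix `B = U_Γ(1) = F* D_Γ F`. -/
def BmatFin (N : ℕ) (a : Fin N → ℤ) (l : Fin N → ℝ) : Matrix (Fin N) (Fin N) ℂ :=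
  UmatFin N a l 1

section AuxSpectral

lemma hepi_aux (m : ℤ) : Complex.exp (2 * (Real.pi : ℂ) * Complex.I * (m : ℂ)) = 1 := by
  rw [show (2 * (Real.pi : ℂ) * Complex.I * (m : ℂ))
      = (m : ℂ) * (2 * (Real.pi : ℂ) * Complex.I) by ring]
  exact Complex.exp_int_mul_two_pi_mul_I m

lemma hexp_congr (z w : ℂ) (m : ℤ) (hm : z - w = 2 * (Real.pi : ℂ) * Complex.I * (m : ℂ)) :
    Complex.exp z = Complex.exp w := by
  have hz : z = w + 2 * (Real.pi : ℂ) * Complex.I * (m : ℂ) := by linear_combination hm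
  rw [hz, Complex.exp_add, hepi_aux, mul_one]

lemma aux_mul (c z w u v : ℂ) (m : ℤ)
    (h : z + w - (u + v) = 2 * (Real.pi : ℂ) * Complex.I * (m : ℂ)) :
    c * Complex.exp z * Complex.exp w = c * Complex.exp u * Complex.exp v := by
  rw [mul_assoc, mul_assoc, ← Complex.exp_add, ← Complex.exp_add,
    hexp_congr (z + w) (u + v) m h]

end AuxSpectral

/-- for a spectral pair (`A = {a_0,…,a_{N−1}}`, `Γ = {λ_0,…,λ_{N−1}}`) with
local translation matrix `B = F* D_Γ F`, for every `i`, `n ∈ ℤ`, `x ∈ [0,1]`, `t ∈ ℝ`: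
`B^{⌊x+t⌋}·(e^{2πi({x+t}+a_k)(λ_i+n)})_k = e^{2πi(λ_i+n)t}·(e^{2πi(x+a_k)(λ_i+n)})_k`. -/
theorem Bpow_floor_action (N : ℕ) (a : Fin N → ℤ) (l : Fin N → ℝ)
    (h : IsSpectrumPair N a l) (i : Fin N) (n : ℤ) (x : ℝ)
    (hx : x ∈ Set.Icc (0 : ℝ) 1) (t : ℝ) :
    (BmatFin N a l ^ ⌊x + t⌋).mulVec
      (fun k : Fin N => Complex.exp (2 * Real.pi * Complex.I *
        (((Int.fract (x + t) : ℝ) : ℂ) + ((a k : ℤ) : ℂ)) * (((l i : ℝ) : ℂ) + (n : ℂ)))) =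
    fun k : Fin N => Complex.exp (2 * Real.pi * Complex.I *
        (((l i : ℝ) : ℂ) + (n : ℂ)) * (t : ℂ)) *
      Complex.exp (2 * Real.pi * Complex.I *
        ((x : ℂ) + ((a k : ℤ) : ℂ)) * (((l i : ℝ) : ℂ) + (n : ℂ))) := by
  obtain ⟨-, -, horth⟩ := h
  have hNpos : 0 < N := i.pos
  have hNR : (0 : ℝ) < (N : ℝ) := by exact_mod_cast hNpos
  have hNC : (N : ℂ) ≠ 0 := by exact_mod_cast hNpos.ne'
  set μ : ℂ := ((l i : ℝ) : ℂ) + (n : ℂ) with hμdef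
  set c : ℝ := 1 / Real.sqrt N with hcdef
  have hc2 : (c : ℂ) * (c : ℂ) = (N : ℂ)⁻¹ := by
    have hr : (c * c : ℝ) = (N : ℝ)⁻¹ := by
      rw [hcdef, div_mul_div_comm, one_mul, Real.mul_self_sqrt hNR.le, one_div]
    calc (c : ℂ) * (c : ℂ) = ((c * c : ℝ) : ℂ) := by push_cast; ring
      _ = (N : ℂ)⁻¹ := by rw [hr]; push_cast; ring
  set F := FmatFin N a l with hFdef
  have hFapp : ∀ p q : Fin N, F p q =
      (c : ℂ) * Complex.exp (-(2 * (Real.pi : ℂ) * Complex.I) * ((l p : ℝ) : ℂ) * ((a q : ℤ) : ℂ)) :=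
    fun p q => rfl
  have hFstar : ∀ p q : Fin N, star (F p q) =
      (c : ℂ) * Complex.exp (2 * (Real.pi : ℂ) * Complex.I * ((l p : ℝ) : ℂ) * ((a q : ℤ) : ℂ)) := by
    intro p q
    rw [hFapp, star_mul']
    have h1 : star ((c : ℝ) : ℂ) = ((c : ℝ) : ℂ) := by
      rw [Complex.star_def, Complex.conj_ofReal]
    have h2 : star (Complex.exp (-(2 * (Real.pi : ℂ) * Complex.I) * ((l p : ℝ) : ℂ) * ((a q : ℤ) : ℂ)))
        = Complex.exp (2 * (Real.pi : ℂ) * Complex.I * ((l p : ℝ) : ℂ) * ((a q : ℤ) : ℂ)) := by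
      rw [Complex.star_def, ← Complex.exp_conj]
      congr 1
      simp only [_root_.map_mul, map_neg, Complex.conj_I, Complex.conj_ofReal, map_intCast,
        map_ofNat]
      ring
    rw [h1, h2]
  -- F is unitary
  have hFl : Fᴴ * F = 1 := by
    ext j k
    have h0 : (Fᴴ * F) j k = ∑ p : Fin N, star (F p j) * F p k := by
      simp [Matrix.mul_apply, Matrix.conjTranspose_apply]
    rw [h0]
    have hterm : ∀ p : Fin N, star (F p j) * F p k =
        (c : ℂ) * (c : ℂ) * Complex.exp (2 * (Real.pi : ℂ) * Complex.I *
          (((a j : ℤ) : ℂ) - ((a k : ℤ) : ℂ)) * ((l p : ℝ) : ℂ)) := by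
      intro p
      rw [hFstar, hFapp, mul_mul_mul_comm, ← Complex.exp_add]
      congr 1
      ring
    rw [Finset.sum_congr rfl (fun p _ => hterm p), ← Finset.mul_sum, horth j k]
    by_cases hjk : j = k
    · simp [hjk, Matrix.one_apply, hc2, inv_mul_cancel₀ hNC]
    · simp [hjk, Matrix.one_apply]
  have hFr : F * Fᴴ = 1 := mul_eq_one_comm.mp hFl
  -- row orthogonality
  have hrow : ∀ p q : Fin N,
      ∑ k : Fin N, Complex.exp (2 * (Real.pi : ℂ) * Complex.I *
        (((l p : ℝ) : ℂ) - ((l q : ℝ) : ℂ)) * ((a k : ℤ) : ℂ)) =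
      if p = q then (N : ℂ) else 0 := by
    intro p q
    have h1 : (F * Fᴴ) q p = ∑ k : Fin N, F q k * star (F p k) := by
      simp [Matrix.mul_apply, Matrix.conjTranspose_apply]
    have h2 : ∀ k : Fin N, F q k * star (F p k) =
        (c : ℂ) * (c : ℂ) * Complex.exp (2 * (Real.pi : ℂ) * Complex.I *
          (((l p : ℝ) : ℂ) - ((l q : ℝ) : ℂ)) * ((a k : ℤ) : ℂ)) := by
      intro k
      rw [hFapp, hFstar, mul_mul_mul_comm, ← Complex.exp_add]
      congr 1
      ring
    have h3 : (F * Fᴴ) q p = (1 : Matrix (Fin N) (Fin N) ℂ) q p := by rw [hFr]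
    rw [h1, Finset.sum_congr rfl (fun k _ => h2 k), ← Finset.mul_sum, hc2] at h3
    have h4 : (∑ k : Fin N, Complex.exp (2 * (Real.pi : ℂ) * Complex.I *
        (((l p : ℝ) : ℂ) - ((l q : ℝ) : ℂ)) * ((a k : ℤ) : ℂ))) =
        (N : ℂ) * (1 : Matrix (Fin N) (Fin N) ℂ) q p := by
      have h5 := congrArg (fun z => (N : ℂ) * z) h3
      simpa [← mul_assoc, mul_inv_cancel₀ hNC] using h5
    rw [h4]
    by_cases hpq : p = q
    · simp [hpq, Matrix.one_apply]
    · have hqp : ¬ q = p := fun hh => hpq hh.symm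
      simp [hpq, Matrix.one_apply, hqp]
  -- the moving vector
  set v : ℝ → Fin N → ℂ := fun s k =>
    Complex.exp (2 * (Real.pi : ℂ) * Complex.I * (((s : ℝ) : ℂ) + ((a k : ℤ) : ℂ)) * μ) with hvdef
  -- step 1 : action of F
  have hFv : ∀ s : ℝ, F.mulVec (v s) = fun j => if i = j then
      (Real.sqrt N : ℂ) * Complex.exp (2 * (Real.pi : ℂ) * Complex.I * ((s : ℝ) : ℂ) * μ) else 0 := by
    intro s
    funext j
    have h1 : F.mulVec (v s) j = ∑ k : Fin N, F j k * v s k := by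
      simp [Matrix.mulVec, dotProduct]
    have h2 : ∀ k : Fin N, F j k * v s k =
        (c : ℂ) * Complex.exp (2 * (Real.pi : ℂ) * Complex.I * ((s : ℝ) : ℂ) * μ) *
        Complex.exp (2 * (Real.pi : ℂ) * Complex.I *
          (((l i : ℝ) : ℂ) - ((l j : ℝ) : ℂ)) * ((a k : ℤ) : ℂ)) := by
      intro k
      rw [hFapp]
      refine aux_mul _ _ _ _ _ ((a k) * n) ?_
      simp only [hμdef]
      push_cast
      ring
    rw [h1, Finset.sum_congr rfl (fun k _ => h2 k), ← Finset.mul_sum, hrow i j]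
    by_cases hij : i = j
    · subst hij
      have hcN : (c : ℂ) * (N : ℂ) = ((Real.sqrt N : ℝ) : ℂ) := by
        have hcr : (c * (N : ℝ) : ℝ) = Real.sqrt N := by
          rw [hcdef, div_mul_eq_mul_div, one_mul, eq_comm,
            eq_div_iff (by positivity : Real.sqrt (N : ℝ) ≠ 0)]
          exact Real.mul_self_sqrt hNR.le
        calc (c : ℂ) * (N : ℂ) = ((c * (N : ℝ) : ℝ) : ℂ) := by push_cast; ring
          _ = _ := by rw [hcr]
      simp only [if_true]
      rw [mul_right_comm, hcN]
    · simp [hij]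
  -- full action of U(m) for integer m
  have hU : ∀ (s : ℝ) (m : ℤ), (UmatFin N a l (m : ℝ)).mulVec (v s) = v (s + m) := by
    intro s m
    have hsplit : (UmatFin N a l (m : ℝ)).mulVec (v s) =
        Fᴴ.mulVec ((DmatFin N l (m : ℝ)).mulVec (F.mulVec (v s))) := by
      rw [Matrix.mulVec_mulVec, Matrix.mulVec_mulVec]
      rfl
    funext k
    rw [hsplit, hFv s]
    have hD : (DmatFin N l (m : ℝ)).mulVec (fun j => if i = j then
        (Real.sqrt N : ℂ) * Complex.exp (2 * (Real.pi : ℂ) * Complex.I * ((s : ℝ) : ℂ) * μ) else 0) =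
        fun j => if i = j then
          Complex.exp (2 * (Real.pi : ℂ) * Complex.I * ((l i : ℝ) : ℂ) * ((m : ℝ) : ℂ)) *
          ((Real.sqrt N : ℂ) * Complex.exp (2 * (Real.pi : ℂ) * Complex.I * ((s : ℝ) : ℂ) * μ)) else 0 := by
      funext j
      rw [DmatFin, Matrix.mulVec_diagonal]
      by_cases hij : i = j
      · subst hij; simp
      · simp [hij]
    rw [hD]
    have hFh : Fᴴ.mulVec (fun j => if i = j then
        Complex.exp (2 * (Real.pi : ℂ) * Complex.I * ((l i : ℝ) : ℂ) * ((m : ℝ) : ℂ)) *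
        ((Real.sqrt N : ℂ) * Complex.exp (2 * (Real.pi : ℂ) * Complex.I * ((s : ℝ) : ℂ) * μ)) else 0) k =
        star (F i k) * (Complex.exp (2 * (Real.pi : ℂ) * Complex.I * ((l i : ℝ) : ℂ) * ((m : ℝ) : ℂ)) *
        ((Real.sqrt N : ℂ) * Complex.exp (2 * (Real.pi : ℂ) * Complex.I * ((s : ℝ) : ℂ) * μ))) := by
      have he : Fᴴ.mulVec (fun j => if i = j then
          Complex.exp (2 * (Real.pi : ℂ) * Complex.I * ((l i : ℝ) : ℂ) * ((m : ℝ) : ℂ)) *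
          ((Real.sqrt N : ℂ) * Complex.exp (2 * (Real.pi : ℂ) * Complex.I * ((s : ℝ) : ℂ) * μ)) else 0) k
          = ∑ j : Fin N, star (F j k) * (if i = j then
          Complex.exp (2 * (Real.pi : ℂ) * Complex.I * ((l i : ℝ) : ℂ) * ((m : ℝ) : ℂ)) *
          ((Real.sqrt N : ℂ) * Complex.exp (2 * (Real.pi : ℂ) * Complex.I * ((s : ℝ) : ℂ) * μ)) else 0) := by
        simp [Matrix.mulVec, dotProduct, Matrix.conjTranspose_apply]
      rw [he, Finset.sum_eq_single i]
      · simp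
      · intro b _ hb
        simp [Ne.symm hb]
      · intro hb; exact absurd (Finset.mem_univ i) hb
    rw [hFh, hFstar]
    have hsqc : (c : ℂ) * ((Real.sqrt N : ℝ) : ℂ) = 1 := by
      have hcr : (c * Real.sqrt N : ℝ) = 1 := by
        rw [hcdef]
        field_simp
      calc (c : ℂ) * ((Real.sqrt N : ℝ) : ℂ) = ((c * Real.sqrt N : ℝ) : ℂ) := by push_cast; ring
        _ = 1 := by rw [hcr]; norm_num
    have hcomb : (c : ℂ) * Complex.exp (2 * (Real.pi : ℂ) * Complex.I * ((l i : ℝ) : ℂ) * ((a k : ℤ) : ℂ)) *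
        (Complex.exp (2 * (Real.pi : ℂ) * Complex.I * ((l i : ℝ) : ℂ) * ((m : ℝ) : ℂ)) *
        (((Real.sqrt N : ℝ) : ℂ) * Complex.exp (2 * (Real.pi : ℂ) * Complex.I * ((s : ℝ) : ℂ) * μ))) =
        ((c : ℂ) * ((Real.sqrt N : ℝ) : ℂ)) *
        Complex.exp (2 * (Real.pi : ℂ) * Complex.I * ((l i : ℝ) : ℂ) * ((a k : ℤ) : ℂ) +
          (2 * (Real.pi : ℂ) * Complex.I * ((l i : ℝ) : ℂ) * ((m : ℝ) : ℂ) +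
           2 * (Real.pi : ℂ) * Complex.I * ((s : ℝ) : ℂ) * μ)) := by
      rw [Complex.exp_add, Complex.exp_add]
      ring
    rw [hcomb, hsqc, one_mul]
    refine hexp_congr _ _ (-(m * n + (a k) * n)) ?_
    simp only [hμdef]
    push_cast
    ring
  -- B and C
  set B := BmatFin N a l with hBdef
  set C := UmatFin N a l (-1) with hCdef
  have hBv : ∀ s : ℝ, B.mulVec (v s) = v (s + 1) := by
    intro s
    have h1 := hU s 1
    simp only [Int.cast_one] at h1
    exact h1
  have hCv : ∀ s : ℝ, C.mulVec (v s) = v (s - 1) := by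
    intro s
    have h1 := hU s (-1)
    simp only [Int.cast_neg, Int.cast_one] at h1
    rw [show s - 1 = s + (-1 : ℝ) by ring]
    exact h1
  have hDmul : ∀ s u : ℝ, DmatFin N l s * DmatFin N l u = DmatFin N l (s + u) := by
    intro s u
    rw [DmatFin, DmatFin, DmatFin, Matrix.diagonal_mul_diagonal]
    have he : (fun j : Fin N => Complex.exp (2 * (Real.pi : ℂ) * Complex.I * ((l j : ℝ) : ℂ) * ((s : ℝ) : ℂ)) *
        Complex.exp (2 * (Real.pi : ℂ) * Complex.I * ((l j : ℝ) : ℂ) * ((u : ℝ) : ℂ))) =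
        fun j : Fin N => Complex.exp (2 * (Real.pi : ℂ) * Complex.I * ((l j : ℝ) : ℂ) * ((s + u : ℝ) : ℂ)) := by
      funext j
      rw [← Complex.exp_add]
      congr 1
      push_cast
      ring
    rw [he]
  have hD0 : DmatFin N l 0 = 1 := by
    rw [DmatFin]
    have h1 : (fun j : Fin N => Complex.exp (2 * (Real.pi : ℂ) * Complex.I * ((l j : ℝ) : ℂ) * ((0 : ℝ) : ℂ)))
        = fun _ => 1 := by
      funext j; norm_num
    rw [h1, Matrix.diagonal_one]
  have hUmul : ∀ s u : ℝ, UmatFin N a l s * UmatFin N a l u = UmatFin N a l (s + u) := by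
    intro s u
    show Fᴴ * DmatFin N l s * F * (Fᴴ * DmatFin N l u * F) = Fᴴ * DmatFin N l (s + u) * F
    calc Fᴴ * DmatFin N l s * F * (Fᴴ * DmatFin N l u * F)
        = Fᴴ * (DmatFin N l s * ((F * Fᴴ) * (DmatFin N l u * F))) := by
          simp only [Matrix.mul_assoc]
      _ = Fᴴ * (DmatFin N l s * DmatFin N l u) * F := by
          rw [hFr, Matrix.one_mul]
          simp only [Matrix.mul_assoc]
      _ = Fᴴ * DmatFin N l (s + u) * F := by rw [hDmul]
  have hU0 : UmatFin N a l 0 = 1 := by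
    show Fᴴ * DmatFin N l 0 * F = 1
    rw [hD0, Matrix.mul_one, hFl]
  have hBC : B * C = 1 := by
    have h10 : UmatFin N a l 1 * UmatFin N a l (-1) = UmatFin N a l 0 := by
      rw [hUmul]; norm_num
    show UmatFin N a l 1 * UmatFin N a l (-1) = 1
    rw [h10, hU0]
  have hCB : C * B = 1 := mul_eq_one_comm.mp hBC
  -- powers
  have hBpow : ∀ (m : ℕ) (s : ℝ), (B ^ m).mulVec (v s) = v (s + m) := by
    intro m
    induction m with
    | zero => intro s; simp
    | succ m ih =>
      intro s
      rw [pow_succ', ← Matrix.mulVec_mulVec, ih, hBv]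
      congr 1
      push_cast
      ring
  have hCpow : ∀ (m : ℕ) (s : ℝ), (C ^ m).mulVec (v s) = v (s - m) := by
    intro m
    induction m with
    | zero => intro s; simp
    | succ m ih =>
      intro s
      rw [pow_succ', ← Matrix.mulVec_mulVec, ih, hCv]
      congr 1
      push_cast
      ring
  have hBCpow : ∀ m : ℕ, B ^ m * C ^ m = 1 := by
    intro m
    induction m with
    | zero => simp
    | succ m ih =>
      rw [pow_succ' B, pow_succ C, Matrix.mul_assoc, ← Matrix.mul_assoc (B ^ m),
        ih, Matrix.one_mul, hBC]
  have hBz : ∀ (z : ℤ) (s : ℝ), (B ^ z).mulVec (v s) = v (s + z) := by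
    intro z s
    cases z with
    | ofNat m =>
      rw [Int.ofNat_eq_coe, zpow_natCast, hBpow]
      congr 1
      try push_cast
      try ring
    | negSucc m =>
      have hinv : (B ^ (m + 1))⁻¹ = C ^ (m + 1) :=
        Matrix.inv_eq_right_inv (hBCpow (m + 1))
      rw [zpow_negSucc, hinv, hCpow]
      congr 1
      push_cast
      try ring
  -- assemble
  have hmain := hBz ⌊x + t⌋ (Int.fract (x + t))
  rw [Int.fract_add_floor] at hmain
  show (B ^ ⌊x + t⌋).mulVec (v (Int.fract (x + t))) = _
  rw [hmain]
  funext k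
  show Complex.exp (2 * (Real.pi : ℂ) * Complex.I * (((x + t : ℝ) : ℂ) + ((a k : ℤ) : ℂ)) * μ) = _
  rw [← Complex.exp_add]
  congr 1
  push_cast
  ring
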